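/- arXiv:1811.10566 — 6 statements merged into one kernel-verified Lean document; each statement's English description precedes it below -/
import Mathlib

section
/- Let x_{j-1} < x_j < x_{j+1} < x_{j+2} with spacings h_j, h_{j+1}, h_{j+2}, and let D_j = f[x_{j-1},x_j,x_{j+1}], D_{j+1} = f[x_j,x_{j+1},x_{j+2}] be the second order divided differences of data f. Then the coefficient a_2 of (x − x_{j+1/2})² in the cubic Lagrange interpolating polynomial written in powers of (x − x_{j+1/2}), where x_{j+1/2} = (x_j + x_{j+1})/2, equals the weighted arithmetic mean w_j·D_j + w_{j+1}·D_{j+1} with w_j = (h_{j+1} + 2h_{j+2})/(2(h_j + h_{j+1} + h_{j+2})) and w_{j+1} = 1 − w_j. -/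
/-- The coefficient `a₂` of `(x - x_{j+1/2})²` in the cubic Lagrange interpolating
polynomial on four consecutive non-uniform grid points equals the weighted arithmetic
mean of the two second-order divided differences. -/
theorem lagrange_cubic_a2_eq_weighted_mean
    (x0 x1 x2 x3 f0 f1 f2 f3 a0 a1 a2 a3 : ℝ)
    (h01 : x0 < x1) (h12 : x1 < x2) (h23 : x2 < x3)
    (hj : ℝ) (hj1 : ℝ) (hj2 : ℝ)
    (hhj : hj = x1 - x0) (hhj1 : hj1 = x2 - x1) (hhj2 : hj2 = x3 - x2)
    (xm : ℝ) (hxm : xm = (x1 + x2) / 2)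
    (hint0 : a0 + a1 * (x0 - xm) + a2 * (x0 - xm) ^ 2 + a3 * (x0 - xm) ^ 3 = f0)
    (hint1 : a0 + a1 * (x1 - xm) + a2 * (x1 - xm) ^ 2 + a3 * (x1 - xm) ^ 3 = f1)
    (hint2 : a0 + a1 * (x2 - xm) + a2 * (x2 - xm) ^ 2 + a3 * (x2 - xm) ^ 3 = f2)
    (hint3 : a0 + a1 * (x3 - xm) + a2 * (x3 - xm) ^ 2 + a3 * (x3 - xm) ^ 3 = f3)
    (Dj Dj1 wj wj1 : ℝ)
    (hDj : Dj = ((f2 - f1) / (x2 - x1) - (f1 - f0) / (x1 - x0)) / (x2 - x0))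
    (hDj1 : Dj1 = ((f3 - f2) / (x3 - x2) - (f2 - f1) / (x2 - x1)) / (x3 - x1))
    (hwj : wj = (hj1 + 2 * hj2) / (2 * (hj + hj1 + hj2)))
    (hwj1 : wj1 = 1 - wj) :
    a2 = wj * Dj + wj1 * Dj1 := by
  subst hint0 hint1 hint2 hint3 hxm hhj hhj1 hhj2 hDj hDj1 hwj hwj1
  have h02 : x2 - x0 ≠ 0 := by linarith
  have h13 : x3 - x1 ≠ 0 := by linarith
  have h01' : x1 - x0 ≠ 0 := by linarith
  have h12' : x2 - x1 ≠ 0 := by linarith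
  have h23' : x3 - x2 ≠ 0 := by linarith
  have h03 : x3 - x0 ≠ 0 := by linarith
  have h03'' : x1 - x0 + (x2 - x1) + (x3 - x2) ≠ 0 := by linarith
  field_simp
  ring
end

section
/- If f is a polynomial of degree at most 2, then the second-order divided differences satisfy D_j = D_{j+1}, and consequently both the weighted arithmetic mean M_j and the weighted harmonic mean V_j equal this common value D, so that the PPH polynomial coincides with the Lagrange polynomial; in particular, the PPH reconstruction reproduces polynomials of degree 2. -/
/-- PPH reproduces polynomials of degree ≤ 2: the two second-order divided
differences coincide, hence the weighted arithmetic mean `Mj` and the weighted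
harmonic mean `Vj` both equal this common value, so the PPH polynomial coincides
with the Lagrange polynomial (their coefficients differ only through `Mj` vs `Vj`). -/
theorem pph_reproduces_degree_two (p : Polynomial ℝ) (hp : p.natDegree ≤ 2)
    (x0 x1 x2 x3 : ℝ) (h01 : x0 < x1) (h12 : x1 < x2) (h23 : x2 < x3)
    (wj wj1 : ℝ) (hwj : 0 < wj) (hwj1 : 0 < wj1) (hsum : wj + wj1 = 1)
    (Dj Dj1 : ℝ)
    (hDj : Dj = ((p.eval x2 - p.eval x1) / (x2 - x1) - (p.eval x1 - p.eval x0) / (x1 - x0)) / (x2 - x0))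
    (hDj1 : Dj1 = ((p.eval x3 - p.eval x2) / (x3 - x2) - (p.eval x2 - p.eval x1) / (x2 - x1)) / (x3 - x1)) :
    Dj = Dj1 ∧ wj * Dj + wj1 * Dj1 = Dj ∧
      (Dj * Dj1 > 0 → Dj * Dj1 / (wj * Dj1 + wj1 * Dj) = Dj) := by
  have h3 : p.natDegree < 3 := lt_of_le_of_lt hp (by norm_num)
  have he : ∀ x : ℝ, p.eval x = p.coeff 0 + p.coeff 1 * x + p.coeff 2 * x ^ 2 := by
    intro x
    rw [Polynomial.eval_eq_sum_range' h3]
    simp only [Finset.sum_range_succ, Finset.sum_range_zero]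
    ring
  have h10 : x1 - x0 ≠ 0 := by linarith
  have h21 : x2 - x1 ≠ 0 := by linarith
  have h20 : x2 - x0 ≠ 0 := by linarith
  have h32 : x3 - x2 ≠ 0 := by linarith
  have h31 : x3 - x1 ≠ 0 := by linarith
  have hDja : Dj = p.coeff 2 := by
    rw [hDj, he, he, he]
    field_simp
    ring
  have hDj1a : Dj1 = p.coeff 2 := by
    rw [hDj1, he, he, he]
    field_simp
    ring
  have hE : Dj = Dj1 := by rw [hDja, hDj1a]
  refine ⟨hE, ?_, ?_⟩
  · rw [← hE]; linear_combination Dj * hsum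
  · intro hpos
    rw [← hE] at hpos ⊢
    have hDne : Dj ≠ 0 := by nlinarith
    have : wj * Dj + wj1 * Dj = Dj := by linear_combination Dj * hsum
    rw [this]
    field_simp
end

section
/- Let 0 < D_j and D_{j+1} > 0 with D_j ≤ D_{j+1} (strictly, D_j < D_{j+1}), and let the PPH cubic polynomial satisfy PPH''(x) = 2·V_j − (12/(2h_j + h_{j+1}))·(D_j − V_j)·(x − x_{j+1/2}). Then PPH''(x) > 0 if and only if x > x_{j+1/2} − ((h_j + h_{j+1} + h_{j+2})/3)·D_{j+1}/(D_{j+1} − D_j). -/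
/-- Convexity region of the PPH cubic in the case `0 < Dj < Dj1`. -/
theorem pph_second_derivative_pos_iff
    (hj hj1 hj2 Dj Dj1 xm Vj : ℝ)
    (h1 : 0 < hj) (h2 : 0 < hj1) (h3 : 0 < hj2)
    (hDj : 0 < Dj) (hlt : Dj < Dj1)
    (wj wj1 : ℝ)
    (hwj : wj = (hj1 + 2 * hj2) / (2 * (hj + hj1 + hj2)))
    (hwj1 : wj1 = 1 - wj)
    (hVj : Vj = Dj * Dj1 / (wj * Dj1 + wj1 * Dj)) :
    ∀ x : ℝ,
      2 * Vj - (12 / (2 * hj + hj1)) * (Dj - Vj) * (x - xm) > 0 ↔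
        x > xm - ((hj + hj1 + hj2) / 3) * (Dj1 / (Dj1 - Dj)) := by
  intro x
  have hS : (0:ℝ) < hj + hj1 + hj2 := by linarith
  have hT : (0:ℝ) < 2 * hj + hj1 := by linarith
  have hD : (0:ℝ) < Dj1 - Dj := by linarith
  have hDj1 : (0:ℝ) < Dj1 := lt_trans hDj hlt
  have hwj1' : wj1 = (2 * hj + hj1) / (2 * (hj + hj1 + hj2)) := by
    rw [hwj1, hwj]; field_simp; ring
  have hwj1pos : 0 < wj1 := by rw [hwj1']; positivity
  have hwjpos : 0 < wj := by rw [hwj]; positivity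
  have hA : 0 < wj * Dj1 + wj1 * Dj := by positivity
  have hVpos : 0 < Vj := by rw [hVj]; positivity
  have hVD : Dj < Vj := by
    rw [hVj, lt_div_iff₀ hA]
    have heq : Dj * (wj * Dj1 + wj1 * Dj) = Dj * Dj1 - wj1 * Dj * (Dj1 - Dj) := by
      rw [hwj1]; ring
    nlinarith [mul_pos (mul_pos hwj1pos hDj) hD, heq]
  set s := 12 / (2 * hj + hj1) * (Vj - Dj) with hs_def
  have hs : 0 < s := by
    apply mul_pos (by positivity) (by linarith)
  set c := (hj + hj1 + hj2) / 3 * (Dj1 / (Dj1 - Dj)) with hc_def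
  have hkey : s * c = 2 * Vj := by
    rw [hs_def, hc_def, hVj, hwj1', hwj]
    field_simp
    ring
  constructor
  · intro h
    have h' : 2 * Vj + s * (x - xm) > 0 := by
      have he : s * (x - xm) = -(12 / (2 * hj + hj1) * (Dj - Vj) * (x - xm)) := by
        rw [hs_def]; ring
      linarith [h, he]
    have hsx : s * (x - (xm - c)) > 0 := by nlinarith [hkey]
    have hx : 0 < x - (xm - c) := by
      by_contra hcon
      push_neg at hcon
      nlinarith [mul_nonneg hs.le (neg_nonneg.mpr hcon)]
    linarith
  · intro h
    have hx : 0 < x - (xm - c) := by linarith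
    have hmul : 0 < s * (x - (xm - c)) := mul_pos hs hx
    have he : s * (x - xm) = -(12 / (2 * hj + hj1) * (Dj - Vj) * (x - xm)) := by
      rw [hs_def]; ring
    nlinarith [hkey, hmul, he]
end

section
/- Let X_PPH = x_{j+1/2} − ((h_j+h_{j+1}+h_{j+2})/3)·D_{j+1}/(D_{j+1}−D_j) be the inflection abscissa threshold of the PPH polynomial and X_PL = x_{j+1/2} − (2h_j+h_{j+1})/6 − ((h_j+h_{j+1}+h_{j+2})/3)·D_j/(D_{j+1}−D_j) that of the cubic Lagrange polynomial (case 0 < D_j < D_{j+1}). Then X_PL − X_PPH = (h_{j+1} + 2h_{j+2})/6 > 0, i.e. the PPH reconstruction is convex on a strictly larger half-line. -/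
theorem pph_convex_on_larger_halfline (hj hj1 hj2 Dj Dj1 xm : ℝ)
    (h1 : 0 < hj) (h2 : 0 < hj1) (h3 : 0 < hj2)
    (hDj : 0 < Dj) (hlt : Dj < Dj1) :
    (xm - (2 * hj + hj1) / 6 - ((hj + hj1 + hj2) / 3) * (Dj / (Dj1 - Dj)))
      - (xm - ((hj + hj1 + hj2) / 3) * (Dj1 / (Dj1 - Dj)))
      = (hj1 + 2 * hj2) / 6 ∧ (hj1 + 2 * hj2) / 6 > 0 := by
  have hne : Dj1 - Dj ≠ 0 := sub_ne_zero.mpr (ne_of_gt hlt)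
  constructor
  · field_simp
    ring
  · positivity
end

section
/- In the case |D_j| > |D_{j+1}| with 0 < D_{j+1} < D_j, the thresholds X_PPH = x_{j+1/2} + ((h_j+h_{j+1}+h_{j+2})/3)·D_j/(D_j − D_{j+1}) and X_PL = x_{j+1/2} + (h_{j+1}+2h_{j+2})/6 + ((h_j+h_{j+1}+h_{j+2})/3)·D_{j+1}/(D_j − D_{j+1}) below which the PPH and Lagrange cubics are convex satisfy X_PPH − X_PL = (2h_j + h_{j+1})/6 > 0. -/
theorem pph_convex_on_larger_halfline_case2 (hj hj1 hj2 Dj Dj1 xm : ℝ)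
    (h1 : 0 < hj) (h2 : 0 < hj1) (h3 : 0 < hj2)
    (hDj1 : 0 < Dj1) (hlt : Dj1 < Dj) :
    (xm + ((hj + hj1 + hj2) / 3) * (Dj / (Dj - Dj1)))
      - (xm + (hj1 + 2 * hj2) / 6 + ((hj + hj1 + hj2) / 3) * (Dj1 / (Dj - Dj1)))
      = (2 * hj + hj1) / 6 ∧ (2 * hj + hj1) / 6 > 0 := by
  have hd : Dj - Dj1 ≠ 0 := by linarith
  constructor
  · field_simp
    ring
  · linarith
end

section
/- Let T = −D_j + ε with ε > 0, in the case D_j ≤ 0 < D_{j+1}. Define J = V(D_j + T, D_{j+1} + T) − T where V is the weighted harmonic mean with weights w_j, w_{j+1} > 0, w_j + w_{j+1} = 1. Then |J| ≤ max(|D_j|, |D_j| + (w_{j+1}/w_j)·ε), and in particular |J| ≤ |D_j| + (w_{j+1}/w_j)·ε. -/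
/-- Case A of the translated harmonic mean: `Dj ≤ 0 < Dj1`, `T = -Dj + ε`. -/
theorem translated_mean_bound_caseA (Dj Dj1 wj wj1 ε T J : ℝ)
    (hwj : 0 < wj) (hwj1 : 0 < wj1) (hsum : wj + wj1 = 1)
    (hε : 0 < ε) (hDj : Dj ≤ 0) (hDj1 : 0 < Dj1)
    (hT : T = -Dj + ε)
    (hJ : J = (Dj + T) * (Dj1 + T) / (wj * (Dj1 + T) + wj1 * (Dj + T)) - T) :
    |J| ≤ max |Dj| (|Dj| + (wj1 / wj) * ε) ∧ |J| ≤ |Dj| + (wj1 / wj) * ε := by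
  have hx : Dj + T = ε := by rw [hT]; ring
  have hy : 0 < Dj1 + T := by nlinarith
  have hεy : ε ≤ Dj1 + T := by nlinarith
  have hd : 0 < wj * (Dj1 + T) + wj1 * (Dj + T) := by rw [hx]; positivity
  have h1 : ε ≤ (Dj + T) * (Dj1 + T) / (wj * (Dj1 + T) + wj1 * (Dj + T)) := by
    rw [le_div_iff₀ hd, hx]
    have hw : wj = 1 - wj1 := by linarith
    rw [hw]
    nlinarith [mul_le_mul_of_nonneg_left hεy (mul_pos hwj1 hε).le]
  have h2 : (Dj + T) * (Dj1 + T) / (wj * (Dj1 + T) + wj1 * (Dj + T)) ≤ ε / wj := by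
    rw [div_le_div_iff₀ hd hwj, hx]
    nlinarith [mul_pos hwj1 (mul_pos hε hε)]
  have hJlo : Dj ≤ J := by rw [hJ]; linarith
  have hJhi : J ≤ Dj + (wj1 / wj) * ε := by
    have key : ε / wj = ε + (wj1 / wj) * ε := by
      field_simp; nlinarith
    rw [hJ]; linarith
  have habs : |J| ≤ |Dj| + (wj1 / wj) * ε := by
    rw [abs_le]
    constructor
    · have : -(|Dj| + (wj1 / wj) * ε) ≤ Dj := by
        have := abs_nonneg Dj
        have : -|Dj| ≤ Dj := neg_abs_le Dj
        have hp : 0 ≤ (wj1 / wj) * ε := by positivity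
        linarith
      linarith
    · have : Dj ≤ |Dj| := le_abs_self Dj
      linarith
  exact ⟨le_max_of_le_right habs, habs⟩
end
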